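/- Let Λ be a ring and let P = proj Λ be the category of finitely generated projective right Λ-modules. Then the functor K^{−,b}(P) → Add(K^b(P)^op, Ab), sending a complex X to the restriction h_X = Hom(−, X)|_{K^b(P)} of its Hom functor, is fully faithful. -/

import Mathlib

/-!
STATEMENT 17: For a ring `Λ` with `P = proj Λ`, the functor
`K^{-,b}(P) ⥤ Add(K^b(P)ᵒᵖ, Ab)`, `X ↦ Hom(-, X)|_{K^b(P)}`, is fully faithful.
Both homotopy categories are realized as full subcategories of the homotopy category of
cochain complexes of `Λ`-modules, and full faithfulness is expressed as bijectivity of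
the restricted Yoneda map on each hom set.
-/

open CategoryTheory CategoryTheory.Limits

universe u

namespace SeqCompletion

variable (Λ : Type u) [Ring Λ]

/-- A complex of modules is a bounded complex of finitely generated projectives. -/
def IsBoundedProj (X : CochainComplex (ModuleCat.{u} Λ) ℤ) : Prop :=
  (∀ n : ℤ, Module.Finite Λ (X.X n) ∧ Module.Projective Λ (X.X n)) ∧
    ∃ N : ℕ, ∀ n : ℤ, (N : ℤ) ≤ |n| → Limits.IsZero (X.X n)

/-- A complex of modules is a bounded above complex of finitely generated projectives
with bounded cohomology. -/
def IsBoundedAboveProjWithBoundedCohomology (X : CochainComplex (ModuleCat.{u} Λ) ℤ) : Prop :=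
  (∀ n : ℤ, Module.Finite Λ (X.X n) ∧ Module.Projective Λ (X.X n)) ∧
    (∃ N : ℤ, ∀ n : ℤ, N ≤ n → Limits.IsZero (X.X n)) ∧
    (∃ N : ℕ, ∀ n : ℤ, (N : ℤ) ≤ |n| → Limits.IsZero (X.homology n))

/-- The homotopy category `K^b(proj Λ)` of bounded complexes of finitely generated
projective modules, as a full subcategory of the homotopy category. -/
abbrev Kb := ObjectProperty.FullSubcategory
  (fun X : HomotopyCategory (ModuleCat.{u} Λ) (ComplexShape.up ℤ) => IsBoundedProj Λ X.as)



section Downward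

variable {α : ℤ → Type*} [∀ i, Nonempty (α i)]

open Classical in
/-- Auxiliary sequence for downward dependent choice. -/
private noncomputable def downAux (n : ℤ) (P : ∀ i : ℤ, α i → α (i + 1) → Prop)
    (a₀ : ∀ i, α i) : ℕ → ∀ i, α i
  | 0 => a₀
  | (k+1) => fun i =>
      if hex : i = n - 1 - k ∧ ∃ z, P i z (downAux n P a₀ k (i + 1)) then hex.2.choose
      else downAux n P a₀ k i

/-- Downward dependent choice on `ℤ`. -/
lemma downward_choice (n : ℤ) (P : ∀ i : ℤ, α i → α (i + 1) → Prop) (a₀ : ∀ i, α i)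
    (h₀ : ∀ i, n ≤ i → P i (a₀ i) (a₀ (i + 1)))
    (step : ∀ i, i < n → ∀ (x : α (i + 1)) (y : α (i + 1 + 1)), P (i + 1) x y → ∃ z, P i z x) :
    ∃ s : ∀ i, α i, (∀ i, P i (s i) (s (i + 1))) ∧ ∀ i, n ≤ i → s i = a₀ i := by
  classical
  have hFsucc : ∀ (k : ℕ) (i : ℤ), i ≠ n - 1 - (k : ℤ) →
      downAux n P a₀ (k + 1) i = downAux n P a₀ k i := by
    intro k i h
    show (if hex : _ ∧ _ then _ else downAux n P a₀ k i) = _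
    rw [dif_neg (fun hc => h hc.1)]
  have hstab : ∀ (i : ℤ) (m : ℕ), (n - i).toNat ≤ m →
      downAux n P a₀ m i = downAux n P a₀ ((n - i).toNat) i := by
    intro i m hm
    induction m with
    | zero => rw [Nat.le_zero.mp hm]
    | succ m ih =>
      rcases Nat.lt_or_ge ((n - i).toNat) (m+1) with h | h
      · have hm' : (n - i).toNat ≤ m := by omega
        have hne : i ≠ n - 1 - (m : ℤ) := by
          have h2 : (n - i) ≤ ((n - i).toNat : ℤ) := Int.self_le_toNat _
          omega
        rw [hFsucc m i hne, ih hm']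
      · rw [le_antisymm hm h]
  have hJ : ∀ (k : ℕ) (i : ℤ), n - 1 - (k : ℤ) < i →
      P i (downAux n P a₀ k i) (downAux n P a₀ k (i + 1)) := by
    intro k
    induction k with
    | zero => intro i hi; exact h₀ i (by omega)
    | succ k ih =>
      intro i hi
      have h1 : downAux n P a₀ (k+1) (i+1) = downAux n P a₀ k (i+1) :=
        hFsucc k (i+1) (by omega)
      by_cases hik : i = n - 1 - (k : ℤ)
      · have hex : ∃ z, P i z (downAux n P a₀ k (i+1)) :=
          step i (by omega) (downAux n P a₀ k (i+1)) (downAux n P a₀ k (i+1+1))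
            (ih (i+1) (by omega))
      
        have h2 : downAux n P a₀ (k+1) i = (And.intro hik hex).2.choose := by
          show (if hex : _ ∧ _ then _ else downAux n P a₀ k i) = _
          rw [dif_pos (And.intro hik hex)]
        rw [h2, h1]
        exact hex.choose_spec
      · rw [hFsucc k i hik, h1]
        exact ih i (by omega)
  refine ⟨fun i => downAux n P a₀ ((n - i).toNat) i, fun i => ?_, fun i hi => ?_⟩
  · show P i (downAux n P a₀ ((n - i).toNat) i) (downAux n P a₀ ((n - (i+1)).toNat) (i+1))
    set m : ℕ := max ((n - i).toNat) ((n - (i+1)).toNat) with hm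
    rw [← hstab i m (le_max_left _ _), ← hstab (i+1) m (le_max_right _ _)]
    apply hJ m i
    have h2 : (n - i) ≤ ((n - i).toNat : ℤ) := Int.self_le_toNat _
    have h3 : ((n - i).toNat : ℤ) ≤ (m : ℤ) := by exact_mod_cast le_max_left _ _
    omega
  · show downAux n P a₀ ((n - i).toNat) i = a₀ i
    rw [Int.toNat_eq_zero.mpr (by omega)]
    rfl

end Downward

section Lifting

variable {Λ}

/-- Lifting through an exact degree of a cochain complex, out of a projective module. -/
lemma exists_lift {Y : CochainComplex (ModuleCat.{u} Λ) ℤ} {j : ℤ}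
    (hj : IsZero (Y.homology j)) {M : ModuleCat.{u} Λ} (hM : Module.Projective Λ M)
    (c : M ⟶ Y.X j) (hc : c ≫ Y.d j (j + 1) = 0) :
    ∃ s : M ⟶ Y.X (j - 1), s ≫ Y.d (j - 1) j = c := by
  have hex : (Y.sc' (j-1) j (j+1)).Exact := by
    rw [← Y.exactAt_iff' (j-1) j (j+1) (by simp) (by simp), Y.exactAt_iff_isZero_homology]
    exact hj
  rw [ShortComplex.moduleCat_exact_iff] at hex
  haveI := hM
  have hsub : ∀ x : M, c x ∈ LinearMap.range (Y.d (j-1) j).hom := by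
    intro x
    obtain ⟨y, hy⟩ := hex (c x) (by
      have := congrArg (fun φ : M ⟶ Y.X (j+1) => φ x) hc
      simp at this
      exact this)
    exact ⟨y, hy⟩
  obtain ⟨h, hh⟩ := Module.projective_lifting_property
      (LinearMap.rangeRestrict (Y.d (j-1) j).hom) (LinearMap.codRestrict _ c.hom hsub)
      (LinearMap.surjective_rangeRestrict _)
  refine ⟨ModuleCat.ofHom h, ?_⟩
  ext x
  have := congrArg (fun φ => (φ x : Y.X j)) hh
  simpa using this

end Lifting

section Trunc

variable {Λ}

/-- The differential of the brutal truncation. -/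
noncomputable def truncD (X : CochainComplex (ModuleCat.{u} Λ) ℤ) (n i : ℤ) :
    (if n ≤ i then X.X i else ModuleCat.of Λ PUnit) ⟶
      (if n ≤ i + 1 then X.X (i + 1) else ModuleCat.of Λ PUnit) :=
  if h : n ≤ i then
    eqToHom (if_pos h) ≫ X.d i (i + 1) ≫ eqToHom (if_pos (show n ≤ i + 1 by omega)).symm
  else 0

lemma truncD_sq (X : CochainComplex (ModuleCat.{u} Λ) ℤ) (n i : ℤ) :
    truncD X n i ≫ truncD X n (i + 1) = 0 := by
  unfold truncD
  by_cases h : n ≤ i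
  · rw [dif_pos h, dif_pos (show n ≤ i + 1 by omega)]
    simp
  · rw [dif_neg h, zero_comp]

/-- The brutal truncation `σ≥n X` of a cochain complex. -/
noncomputable def trunc (X : CochainComplex (ModuleCat.{u} Λ) ℤ) (n : ℤ) :
    CochainComplex (ModuleCat.{u} Λ) ℤ :=
  CochainComplex.of (fun i => if n ≤ i then X.X i else ModuleCat.of Λ PUnit)
    (truncD X n) (truncD_sq X n)

lemma trunc_X_eq {X : CochainComplex (ModuleCat.{u} Λ) ℤ} {n i : ℤ} (h : n ≤ i) :
    (trunc X n).X i = X.X i := if_pos h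

lemma trunc_isZero {X : CochainComplex (ModuleCat.{u} Λ) ℤ} {n i : ℤ} (h : i < n) :
    IsZero ((trunc X n).X i) := by
  have e : (trunc X n).X i = ModuleCat.of Λ PUnit := if_neg (not_le.mpr h)
  rw [e]
  exact ModuleCat.isZero_of_subsingleton _

lemma trunc_d {X : CochainComplex (ModuleCat.{u} Λ) ℤ} {n i : ℤ} (h : n ≤ i) :
    (trunc X n).d i (i + 1) =
      eqToHom (trunc_X_eq h) ≫ X.d i (i + 1) ≫
        eqToHom (trunc_X_eq (show n ≤ i + 1 by omega)).symm := by
  have : (trunc X n).d i (i + 1) = truncD X n i :=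
    CochainComplex.of_d _ (truncD X n) i
  rw [this, truncD, dif_pos h]
  rfl

/-- The inclusion of the brutal truncation. -/
noncomputable def truncι (X : CochainComplex (ModuleCat.{u} Λ) ℤ) (n : ℤ) :
    trunc X n ⟶ X where
  f i := if h : n ≤ i then eqToHom (trunc_X_eq h) else 0
  comm' i j hij := by
    obtain rfl : i + 1 = j := hij
    by_cases h : n ≤ i
    · rw [dif_pos h, dif_pos (show n ≤ i + 1 by omega), trunc_d h]
      simp
    · exact (trunc_isZero (not_le.mp h)).eq_of_src _ _

lemma truncι_f (X : CochainComplex (ModuleCat.{u} Λ) ℤ) (n i : ℤ) :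
    (truncι X n).f i = if h : n ≤ i then eqToHom (trunc_X_eq h) else 0 := rfl

lemma truncι_f_isIso {X : CochainComplex (ModuleCat.{u} Λ) ℤ} {n i : ℤ} (h : n ≤ i) :
    IsIso ((truncι X n).f i) := by
  rw [truncι_f, dif_pos h]
  infer_instance

/-- The transition map between brutal truncations, for `m ≤ n`. -/
noncomputable def truncMap (X : CochainComplex (ModuleCat.{u} Λ) ℤ) {n m : ℤ} (hmn : m ≤ n) :
    trunc X n ⟶ trunc X m where
  f i := if h : n ≤ i then
      eqToHom ((trunc_X_eq h).trans (trunc_X_eq (hmn.trans h)).symm)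
    else 0
  comm' i j hij := by
    obtain rfl : i + 1 = j := hij
    by_cases h : n ≤ i
    · rw [dif_pos h, dif_pos (show n ≤ i + 1 by omega), trunc_d h,
        trunc_d (hmn.trans h)]
      simp
    · exact (trunc_isZero (not_le.mp h)).eq_of_src _ _

lemma truncMap_f (X : CochainComplex (ModuleCat.{u} Λ) ℤ) {n m : ℤ} (hmn : m ≤ n) (i : ℤ) :
    (truncMap X hmn).f i = if h : n ≤ i then
      eqToHom ((trunc_X_eq h).trans (trunc_X_eq (hmn.trans h)).symm) else 0 := rfl

lemma truncMap_f_isIso {X : CochainComplex (ModuleCat.{u} Λ) ℤ} {n m i : ℤ} (hmn : m ≤ n)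
    (h : n ≤ i) : IsIso ((truncMap X hmn).f i) := by
  rw [truncMap_f, dif_pos h]
  infer_instance

lemma truncMap_comp_truncι {X : CochainComplex (ModuleCat.{u} Λ) ℤ} {n m : ℤ} (hmn : m ≤ n) :
    truncMap X hmn ≫ truncι X m = truncι X n := by
  apply HomologicalComplex.hom_ext
  intro i
  rw [HomologicalComplex.comp_f, truncMap_f, truncι_f, truncι_f]
  by_cases h : n ≤ i
  · rw [dif_pos h, dif_pos (hmn.trans h), dif_pos h]
    simp
  · exact (trunc_isZero (not_le.mp h)).eq_of_src _ _

/-- A chain map from a complex vanishing below `m` factors through the truncation. -/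
lemma exists_factor_trunc {X P : CochainComplex (ModuleCat.{u} Λ) ℤ} {m : ℤ}
    (hP : ∀ i, i < m → IsZero (P.X i)) (u : P ⟶ X) :
    ∃ u' : P ⟶ trunc X m, u' ≫ truncι X m = u := by
  refine ⟨{ f := fun i => if h : m ≤ i then u.f i ≫ eqToHom (trunc_X_eq h).symm else 0,
            comm' := ?_ }, ?_⟩
  · intro i j hij
    obtain rfl : i + 1 = j := hij
    by_cases h : m ≤ i
    · rw [dif_pos h, dif_pos (show m ≤ i + 1 by omega), trunc_d h]
      simp [u.comm i (i+1)]
    · exact (hP i (not_le.mp h)).eq_of_src _ _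
  · apply HomologicalComplex.hom_ext
    intro i
    rw [HomologicalComplex.comp_f, truncι_f]
    dsimp only
    by_cases h : m ≤ i
    · rw [dif_pos h, dif_pos h]
      simp
    · exact (hP i (not_le.mp h)).eq_of_src _ _

lemma module_finite_of_subsingleton (M : ModuleCat.{u} Λ) [Subsingleton M] :
    Module.Finite Λ M :=
  Module.Finite.of_surjective (0 : Λ →ₗ[Λ] M) (fun x => ⟨0, Subsingleton.elim _ _⟩)

lemma module_projective_of_subsingleton (M : ModuleCat.{u} Λ) [Subsingleton M] :
    Module.Projective Λ M :=
  Module.projective_def'.2 ⟨0, by ext x; exact Subsingleton.elim _ _⟩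

lemma trunc_finite_projective {X : CochainComplex (ModuleCat.{u} Λ) ℤ}
    (hX : ∀ i : ℤ, Module.Finite Λ (X.X i) ∧ Module.Projective Λ (X.X i)) (n i : ℤ) :
    Module.Finite Λ ((trunc X n).X i) ∧ Module.Projective Λ ((trunc X n).X i) := by
  by_cases h : n ≤ i
  · rw [trunc_X_eq h]
    exact hX i
  · have e : (trunc X n).X i = ModuleCat.of Λ PUnit := if_neg h
    rw [e]
    exact ⟨module_finite_of_subsingleton _, module_projective_of_subsingleton _⟩

lemma trunc_bounded {X : CochainComplex (ModuleCat.{u} Λ) ℤ} {NX : ℤ}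
    (hNX : ∀ i : ℤ, NX ≤ i → IsZero (X.X i)) (n : ℤ) :
    ∃ N : ℕ, ∀ i : ℤ, (N : ℤ) ≤ |i| → IsZero ((trunc X n).X i) := by
  refine ⟨(n.natAbs + NX.natAbs + 1), fun i hi => ?_⟩
  rcases le_or_gt n i with h | h
  · have : NX ≤ i := by
      rcases abs_cases i with ⟨he, _⟩ | ⟨he, hneg⟩
      · have h1 : (NX : ℤ) ≤ NX.natAbs := Int.le_natAbs
        omega
      · have h1 : (n : ℤ) ≥ -n.natAbs := by
          have := Int.le_natAbs (a := -n)
          omega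
        omega
    exact (hNX i this).of_iso (eqToIso (trunc_X_eq h))
  · exact trunc_isZero h

end Trunc

section HomotopyLemmas

variable {Λ}

/-- A chain map vanishing in degrees `≥ n` into a complex exact in degrees `< n`
is null-homotopic, provided the source has projective components. -/
lemma homotopy_zero_of_vanishing {W Y : CochainComplex (ModuleCat.{u} Λ) ℤ} (n : ℤ)
    (hW : ∀ i, Module.Projective Λ (W.X i))
    (hY : ∀ i, i < n → IsZero (Y.homology i))
    (g : W ⟶ Y) (hg : ∀ i, n ≤ i → g.f i = 0) :
    Nonempty (Homotopy g (0 : W ⟶ Y)) := by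
  haveI : ∀ i : ℤ, Nonempty (W.X i ⟶ Y.X (i - 1)) := fun i => ⟨0⟩
  obtain ⟨s, hsP, -⟩ := downward_choice n
    (fun i s₁ s₂ => g.f i =
      W.d i (i+1) ≫ s₂ ≫ (Y.XIsoOfEq (show i + 1 - 1 = i by omega)).hom + s₁ ≫ Y.d (i-1) i)
    (fun _ => 0)
    (fun i hi => by beta_reduce; rw [hg i hi]; simp)
    (fun i hi x y hPxy => by
      beta_reduce at hPxy ⊢
      have hc : (g.f i - W.d i (i+1) ≫ x ≫ (Y.XIsoOfEq (show i + 1 - 1 = i by omega)).hom) ≫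
          Y.d i (i+1) = 0 := by
        rw [Preadditive.sub_comp, Category.assoc, Category.assoc,
          HomologicalComplex.XIsoOfEq_hom_comp_d, g.comm i (i+1), hPxy,
          Preadditive.comp_add]
        simp
      obtain ⟨s', hs'⟩ := exists_lift (hY i hi) (hW i) _ hc
      exact ⟨s', by beta_reduce; rw [hs']; abel⟩)
  refine ⟨⟨fun i j => if h : j + 1 = i then
      s i ≫ (Y.XIsoOfEq (show i - 1 = j by omega)).hom else 0, ?_, ?_⟩⟩
  · intro i j hnr
    exact dif_neg (fun h => hnr h)
  · intro i
    rw [dNext_eq _ (show (ComplexShape.up ℤ).Rel i (i+1) from rfl),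
      prevD_eq _ (show (ComplexShape.up ℤ).Rel (i-1) i by simp)]
    rw [dif_pos (show i + 1 = i + 1 from rfl), dif_pos (show (i-1) + 1 = i by omega)]
    have e : (Y.XIsoOfEq (show i - 1 = i - 1 by omega)).hom = 𝟙 _ := by
      simp [HomologicalComplex.XIsoOfEq]
    rw [e, Category.comp_id]
    simpa using hsP i

/-- If `δ : W ⟶ Y` becomes null-homotopic after composing with a map that is an isomorphism
in degrees `≥ n`, and `Y` is exact in degrees `< n`, then `δ` is null-homotopic. -/
lemma homotopy_zero_of_comp {U W Y : CochainComplex (ModuleCat.{u} Λ) ℤ} (n : ℤ)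
    (φ : U ⟶ W) (hφ : ∀ i, n ≤ i → IsIso (φ.f i))
    (hW : ∀ i, Module.Projective Λ (W.X i))
    (hY : ∀ i, i < n → IsZero (Y.homology i))
    (δ : W ⟶ Y) (H : Homotopy (φ ≫ δ) 0) :
    Nonempty (Homotopy δ (0 : W ⟶ Y)) := by
  classical
  let t : ∀ i j, W.X i ⟶ Y.X j := fun i j =>
    if h : n ≤ i then (@inv _ _ _ _ (φ.f i) (hφ i h)) ≫ H.hom i j else 0
  have tzero : ∀ i j, ¬ (ComplexShape.up ℤ).Rel j i → t i j = 0 := by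
    intro i j hnr
    show dite _ _ _ = 0
    by_cases h : n ≤ i
    · rw [dif_pos h, H.zero i j hnr, comp_zero]
    · rw [dif_neg h]
  set N : W ⟶ Y := Homotopy.nullHomotopicMap t with hN
  have hN0 : Homotopy N 0 := Homotopy.nullHomotopy t tzero
  have hvanish : ∀ i, n ≤ i → (δ - N).f i = 0 := by
    intro i hi
    haveI h1 : IsIso (φ.f i) := hφ i hi
    haveI h2 : IsIso (φ.f (i+1)) := hφ (i+1) (by omega)
    rw [HomologicalComplex.sub_f_apply, sub_eq_zero, ← cancel_epi (φ.f i)]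
    have hNf : N.f i = dNext i t + prevD i t := rfl
    rw [hNf, dNext_eq _ (show (ComplexShape.up ℤ).Rel i (i+1) from rfl),
      prevD_eq _ (show (ComplexShape.up ℤ).Rel (i-1) i by simp)]
    have ht1 : t (i+1) i = inv (φ.f (i+1)) ≫ H.hom (i+1) i := by
      show dite _ _ _ = _
      rw [dif_pos (show n ≤ i + 1 by omega)]
    have ht2 : t i (i-1) = inv (φ.f i) ≫ H.hom i (i-1) := by
      show dite _ _ _ = _
      rw [dif_pos hi]
    have hcm := H.comm i
    rw [dNext_eq _ (show (ComplexShape.up ℤ).Rel i (i+1) from rfl),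
      prevD_eq _ (show (ComplexShape.up ℤ).Rel (i-1) i by simp)] at hcm
    have hφδ : φ.f i ≫ δ.f i = U.d i (i+1) ≫ H.hom (i+1) i + H.hom i (i-1) ≫ Y.d (i-1) i := by
      have : (φ ≫ δ).f i = φ.f i ≫ δ.f i := rfl
      rw [← this, hcm]
      simp
    rw [hφδ, ht1, ht2, Preadditive.comp_add]
    congr 1
    · rw [← Category.assoc, ← Category.assoc, φ.comm i (i+1), Category.assoc,
        Category.assoc, IsIso.hom_inv_id_assoc]
    · rw [← Category.assoc, ← Category.assoc, IsIso.hom_inv_id, Category.id_comp]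
  obtain ⟨Hδ'⟩ := homotopy_zero_of_vanishing n hW hY (δ - N) hvanish
  refine ⟨(Homotopy.ofEq (by rw [sub_add_cancel] : δ = (δ - N) + N).symm).symm.trans
    ((Hδ'.add hN0).trans (Homotopy.ofEq (by simp)))⟩

/-- In the homotopy category: a map out of `W` vanishing on a "truncation" of `W` vanishes. -/
lemma eq_zero_of_comp_eq_zero {U W Y : CochainComplex (ModuleCat.{u} Λ) ℤ} (n : ℤ)
    (φ : U ⟶ W) (hφ : ∀ i, n ≤ i → IsIso (φ.f i))
    (hW : ∀ i, Module.Projective Λ (W.X i))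
    (hY : ∀ i, i < n → IsZero (Y.homology i))
    (δ : (HomotopyCategory.quotient (ModuleCat.{u} Λ) (ComplexShape.up ℤ)).obj W ⟶
      (HomotopyCategory.quotient (ModuleCat.{u} Λ) (ComplexShape.up ℤ)).obj Y)
    (h : (HomotopyCategory.quotient (ModuleCat.{u} Λ) (ComplexShape.up ℤ)).map φ ≫ δ = 0) :
    δ = 0 := by
  obtain ⟨δ', rfl⟩ := (HomotopyCategory.quotient _ _).map_surjective δ
  rw [← Functor.map_comp] at h
  have h0 : (HomotopyCategory.quotient (ModuleCat.{u} Λ) (ComplexShape.up ℤ)).map (φ ≫ δ') =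
      (HomotopyCategory.quotient (ModuleCat.{u} Λ) (ComplexShape.up ℤ)).map 0 := by
    rw [h, Functor.map_zero]
  obtain ⟨Hδ⟩ := homotopy_zero_of_comp n φ hφ hW hY δ'
    (HomotopyCategory.homotopyOfEq _ _ h0)
  rw [show δ' = _ from rfl] at *
  calc (HomotopyCategory.quotient (ModuleCat.{u} Λ) (ComplexShape.up ℤ)).map δ'
      = (HomotopyCategory.quotient (ModuleCat.{u} Λ) (ComplexShape.up ℤ)).map 0 :=
        HomotopyCategory.eq_of_homotopy _ _ Hδ
    _ = 0 := Functor.map_zero _ _ _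

/-- Extension of a chain map on the brutal truncation `σ≥n X` to all of `X`,
when the target is exact in degrees `≤ n`. -/
lemma exists_extension {X Y : CochainComplex (ModuleCat.{u} Λ) ℤ} (n : ℤ)
    (hXp : ∀ i, Module.Projective Λ (X.X i))
    (hY : ∀ i, i ≤ n → IsZero (Y.homology i)) (g : trunc X n ⟶ Y) :
    ∃ f : X ⟶ Y, truncι X n ≫ f = g := by
  haveI : ∀ i : ℤ, Nonempty (X.X i ⟶ Y.X i) := fun i => ⟨0⟩
  obtain ⟨s, hsP, hs0⟩ := downward_choice n
    (fun i s₁ s₂ => s₁ ≫ Y.d i (i+1) = X.d i (i+1) ≫ s₂)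
    (fun i => if h : n ≤ i then eqToHom (trunc_X_eq h).symm ≫ g.f i else 0)
    (fun i hi => by
      beta_reduce
      rw [dif_pos hi, dif_pos (show n ≤ i + 1 by omega)]
      have hcm := g.comm i (i+1)
      rw [trunc_d hi] at hcm
      rw [Category.assoc, hcm]
      simp)
    (fun i hi x y hPxy => by
      beta_reduce at hPxy ⊢
      have hc : (X.d i (i+1) ≫ x) ≫ Y.d (i+1) (i+1+1) = 0 := by
        rw [Category.assoc, hPxy, ← Category.assoc]
        simp
      obtain ⟨s', hs'⟩ := exists_lift (hY (i+1) (by omega)) (hXp i) _ hc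
      refine ⟨s' ≫ (Y.XIsoOfEq (show i + 1 - 1 = i by omega)).hom, ?_⟩
      rw [Category.assoc, HomologicalComplex.XIsoOfEq_hom_comp_d, hs'])
  refine ⟨{ f := s, comm' := fun i j hij => by obtain rfl : i + 1 = j := hij; exact hsP i }, ?_⟩
  apply HomologicalComplex.hom_ext
  intro i
  rw [HomologicalComplex.comp_f, truncι_f]
  by_cases h : n ≤ i
  · rw [dif_pos h]
    show eqToHom _ ≫ s i = g.f i
    rw [hs0 i h, dif_pos h, ← Category.assoc, eqToHom_trans, eqToHom_refl, Category.id_comp]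
  · exact (trunc_isZero (not_le.mp h)).eq_of_src _ _

end HomotopyLemmas


theorem Kminusb_to_functors_on_Kb_fullyFaithful (X Y : HomotopyCategory (ModuleCat.{u} Λ) (ComplexShape.up ℤ))
    (hX : IsBoundedAboveProjWithBoundedCohomology Λ X.as)
    (hY : IsBoundedAboveProjWithBoundedCohomology Λ Y.as) :
    Function.Bijective
      (fun f : X ⟶ Y =>
        Functor.whiskerLeft (ObjectProperty.ι
            (fun Z : HomotopyCategory (ModuleCat.{u} Λ) (ComplexShape.up ℤ) =>
              IsBoundedProj Λ Z.as)).op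
          (preadditiveYoneda.map f)) := by
  classical
  obtain ⟨hXfp, ⟨NX, hNX⟩, -⟩ := hX
  obtain ⟨-, -, ⟨NY, hNY⟩⟩ := hY
  set Q := HomotopyCategory.quotient (ModuleCat.{u} Λ) (ComplexShape.up ℤ) with hQdef
  set n : ℤ := -(NY : ℤ) with hn
  have hYex : ∀ i : ℤ, i ≤ n → IsZero (Y.as.homology i) := fun i hi =>
    hNY i (le_abs.mpr (Or.inr (by omega)))
  have hYex' : ∀ i : ℤ, i < n → IsZero (Y.as.homology i) := fun i hi => hYex i (by omega)
  have hXproj : ∀ i, Module.Projective Λ (X.as.X i) := fun i => (hXfp i).2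
  have hmem : ∀ m : ℤ, IsBoundedProj Λ (trunc X.as m) := fun m =>
    ⟨trunc_finite_projective hXfp m, trunc_bounded hNX m⟩
  let T : ∀ m : ℤ, Kb Λ := fun m => ⟨Q.obj (trunc X.as m), hmem m⟩
  constructor
  · -- injectivity
    intro f g h
    have he : (Q.map (truncι X.as n) : Q.obj (trunc X.as n) ⟶ X) ≫ f =
        Q.map (truncι X.as n) ≫ g :=
      congrArg (fun η => η.app (Opposite.op (T n)) (Q.map (truncι X.as n))) h
    have h2 : Q.map (truncι X.as n) ≫ (f - g) = 0 := by
      erw [Preadditive.comp_sub, he, sub_self]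
    have h3 : (f - g : Q.obj X.as ⟶ Q.obj Y.as) = 0 :=
      eq_zero_of_comp_eq_zero n (truncι X.as n) (fun i hi => truncι_f_isIso hi) hXproj
        hYex' (f - g) h2
    exact sub_eq_zero.mp h3
  · -- surjectivity
    intro η
    obtain ⟨g', hg'⟩ := Q.map_surjective
      (η.app (Opposite.op (T n)) (Q.map (truncι X.as n) : Q.obj (trunc X.as n) ⟶ X))
    obtain ⟨f', hf'⟩ := exists_extension n hXproj hYex g'
    have key : ∀ (m : ℤ) (hm : m ≤ n),
        η.app (Opposite.op (T m)) (Q.map (truncι X.as m) : Q.obj (trunc X.as m) ⟶ X) =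
          Q.map (truncι X.as m) ≫ Q.map f' := by
      intro m hm
      have hnat := η.naturality
        (Quiver.Hom.op (show T n ⟶ T m from ObjectProperty.homMk (Q.map (truncMap X.as hm))))
      have hnat' := congrArg (fun ψ => ψ (Q.map (truncι X.as m) : Q.obj (trunc X.as m) ⟶ X))
        hnat
      have hLHS : η.app (Opposite.op (T n))
          ((Q.map (truncMap X.as hm) ≫ Q.map (truncι X.as m) : Q.obj (trunc X.as n) ⟶ X)) =
          Q.map (truncMap X.as hm) ≫
            η.app (Opposite.op (T m)) (Q.map (truncι X.as m) : Q.obj (trunc X.as m) ⟶ X) :=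
      hnat'
      erw [← Functor.map_comp, truncMap_comp_truncι] at hLHS
      have hg'' : Q.map g' = Q.map (truncι X.as n) ≫ Q.map f' := by
        rw [← Functor.map_comp, hf']
      rw [← hg', hg'', ← truncMap_comp_truncι hm, Functor.map_comp, Category.assoc] at hLHS
      have hzero : Q.map (truncMap X.as hm) ≫
          ((show Q.obj (trunc X.as m) ⟶ Q.obj Y.as from
            η.app (Opposite.op (T m)) (Q.map (truncι X.as m) : Q.obj (trunc X.as m) ⟶ X)) -
            Q.map (truncι X.as m) ≫ Q.map f') = 0 := by
        erw [Preadditive.comp_sub, ← hLHS, sub_self]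
      have := eq_zero_of_comp_eq_zero n (truncMap X.as hm)
        (fun i hi => truncMap_f_isIso hm hi)
        (fun i => (trunc_finite_projective hXfp m i).2) hYex' _ hzero
      rwa [sub_eq_zero] at this
    refine ⟨Q.map f', ?_⟩
    refine NatTrans.ext (funext fun Aop => ?_)
    obtain ⟨A⟩ := Aop
    apply AddCommGrpCat.ext
    intro u
    obtain ⟨hAfp, NA, hNA⟩ := A.property
    set m : ℤ := min n (-(NA : ℤ)) with hm
    have hmn : m ≤ n := min_le_left _ _
    have hAzero : ∀ i : ℤ, i < m → IsZero (A.obj.as.X i) := fun i hi =>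
      hNA i (le_abs.mpr (Or.inr (by omega)))
    obtain ⟨u₀, hu₀⟩ := Q.map_surjective (u : A.obj ⟶ X)
    obtain ⟨u₁, hu₁⟩ := exists_factor_trunc hAzero u₀
    have hufact : (u : A.obj ⟶ X) = Q.map u₁ ≫ Q.map (truncι X.as m) := by
      rw [← Functor.map_comp, hu₁, hu₀]
    have hnat := η.naturality (Quiver.Hom.op (show A ⟶ T m from ObjectProperty.homMk (Q.map u₁)))
    have hnat' := congrArg (fun ψ => ψ (Q.map (truncι X.as m) : Q.obj (trunc X.as m) ⟶ X))
      hnat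
    have hstep : η.app (Opposite.op A)
        ((Q.map u₁ ≫ Q.map (truncι X.as m) : A.obj ⟶ X)) =
        Q.map u₁ ≫ η.app (Opposite.op (T m))
          (Q.map (truncι X.as m) : Q.obj (trunc X.as m) ⟶ X) := hnat'
    erw [← hufact] at hstep
    rw [key m hmn] at hstep
    show (u : A.obj ⟶ X) ≫ Q.map f' = η.app (Opposite.op A) u
    rw [hstep, hufact]
    exact Category.assoc _ _ _


end SeqCompletion
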